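/- Let C be an n×m real cost matrix, λ > 0, and let r ∈ ℝ^n, c ∈ ℝ^m be probability vectors with strictly positive entries. A matrix P ∈ U(r,c) minimizes ⟨C,P⟩ − (1/λ)H(P) over U(r,c) if and only if there exist strictly positive vectors u ∈ ℝ^n and v ∈ ℝ^m such that P_ij = u_i · e^{−λ C_ij} · v_j for all i,j; i.e., the Sinkhorn plan is a diagonal scaling of the matrix e^{−λC}. -/

import Mathlib

/-- The entropy-regularized transport objective `⟨C,P⟩ − (1/λ)H(P)`,
where `H(P) = −Σ_{ij} P_ij log P_ij` (with `0 log 0 = 0`). -/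
noncomputable def eotObjective {n m : ℕ} (C : Matrix (Fin n) (Fin m) ℝ) (lam : ℝ)
    (P : Matrix (Fin n) (Fin m) ℝ) : ℝ :=
  (∑ i, ∑ j, C i j * P i j) - (1 / lam) * (-(∑ i, ∑ j, P i j * Real.log (P i j)))

/-- `U(r,c)`: nonnegative matrices with row sums `r` and column sums `c`. -/
def transportPolytope {n m : ℕ} (r : Fin n → ℝ) (c : Fin m → ℝ) :
    Set (Matrix (Fin n) (Fin m) ℝ) :=
  {P | (∀ i j, 0 ≤ P i j) ∧ (∀ i, ∑ j, P i j = r i) ∧ (∀ j, ∑ i, P i j = c j)}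

open Real
set_option maxHeartbeats 1000000

section Aux

lemma gibbs_pt {q p : ℝ} (hq : 0 ≤ q) (hp : 0 < p) :
    q - p ≤ q * Real.log q - q * Real.log p := by
  rcases eq_or_lt_of_le hq with h | h
  · simp [← h]; positivity
  · have := Real.log_le_sub_one_of_pos (show 0 < p / q by positivity)
    rw [Real.log_div hp.ne' h.ne'] at this
    have h2 := mul_le_mul_of_nonneg_left this h.le
    rw [mul_sub, mul_sub, mul_div_cancel₀ _ h.ne', mul_one] at h2
    linarith

lemma obj_formula {n m : ℕ} (C : Matrix (Fin n) (Fin m) ℝ) (lam : ℝ)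
    (r : Fin n → ℝ) (c : Fin m → ℝ) (P Q : Matrix (Fin n) (Fin m) ℝ)
    (u : Fin n → ℝ) (v : Fin m → ℝ)
    (hlam : lam ≠ 0) (hQ : Q ∈ transportPolytope r c)
    (hrep : ∀ i j, lam * C i j = log (u i) + log (v j) - log (P i j)) :
    lam * eotObjective C lam Q =
      (∑ i, r i * log (u i)) + (∑ j, c j * log (v j)) +
        ∑ i, ∑ j, (Q i j * log (Q i j) - Q i j * log (P i j)) := by
  have h1 : lam * eotObjective C lam Q
      = ∑ i, ∑ j, (lam * C i j * Q i j + Q i j * log (Q i j)) := by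
    have key : ∀ A B : ℝ, lam * (A - 1 / lam * (-B)) = lam * A + B := by
      intro A B; field_simp; ring
    unfold eotObjective
    rw [key, Finset.mul_sum, ← Finset.sum_add_distrib]
    refine Finset.sum_congr rfl fun i _ => ?_
    rw [Finset.mul_sum, ← Finset.sum_add_distrib]
    exact Finset.sum_congr rfl fun j _ => by ring
  rw [h1]
  have h2 : ∀ i j, lam * C i j * Q i j + Q i j * log (Q i j)
      = Q i j * log (u i) + Q i j * log (v j)
        + (Q i j * log (Q i j) - Q i j * log (P i j)) := by
    intro i j; rw [hrep i j]; ring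
  simp only [h2, Finset.sum_add_distrib]
  congr 1
  · congr 1
    · apply Finset.sum_congr rfl; intro i _
      rw [← Finset.sum_mul, hQ.2.1 i]
    · rw [Finset.sum_comm]
      apply Finset.sum_congr rfl; intro j _
      rw [← Finset.sum_mul, hQ.2.2 j]

lemma min_of_scaling {n m : ℕ} (C : Matrix (Fin n) (Fin m) ℝ) (lam : ℝ) (hlam : 0 < lam)
    (r : Fin n → ℝ) (c : Fin m → ℝ) (hr1 : ∑ i, r i = 1) (hc1 : ∑ j, c j = 1)
    (P : Matrix (Fin n) (Fin m) ℝ) (hP : P ∈ transportPolytope r c)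
    (u : Fin n → ℝ) (v : Fin m → ℝ) (hu : ∀ i, 0 < u i) (hv : ∀ j, 0 < v j)
    (hform : ∀ i j, P i j = u i * Real.exp (-lam * C i j) * v j) :
    ∀ Q ∈ transportPolytope r c, eotObjective C lam P ≤ eotObjective C lam Q := by
  intro Q hQ
  have Ppos : ∀ i j, 0 < P i j := by
    intro i j; rw [hform]
    exact mul_pos (mul_pos (hu i) (Real.exp_pos _)) (hv j)
  have hrep : ∀ i j, lam * C i j = log (u i) + log (v j) - log (P i j) := by
    intro i j
    rw [hform i j, Real.log_mul (mul_pos (hu i) (Real.exp_pos _)).ne' (hv j).ne',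
      Real.log_mul (hu i).ne' (Real.exp_ne_zero _), Real.log_exp]
    ring
  have hfP := obj_formula C lam r c P P u v hlam.ne' hP hrep
  have hfQ := obj_formula C lam r c P Q u v hlam.ne' hQ hrep
  have hz : ∑ i, ∑ j, (P i j * log (P i j) - P i j * log (P i j)) = 0 := by simp
  rw [hz, add_zero] at hfP
  have hge : (0:ℝ) ≤ ∑ i, ∑ j, (Q i j * log (Q i j) - Q i j * log (P i j)) := by
    have hQs : ∑ i, ∑ j, Q i j = 1 := by
      rw [Finset.sum_congr rfl fun i _ => hQ.2.1 i, hr1]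
    have hPs : ∑ i, ∑ j, P i j = 1 := by
      rw [Finset.sum_congr rfl fun i _ => hP.2.1 i, hr1]
    have : ∑ i, ∑ j, (Q i j - P i j) ≤
        ∑ i, ∑ j, (Q i j * log (Q i j) - Q i j * log (P i j)) := by
      refine Finset.sum_le_sum fun i _ => Finset.sum_le_sum fun j _ => ?_
      exact gibbs_pt (hQ.1 i j) (Ppos i j)
    simpa [Finset.sum_sub_distrib, hQs, hPs] using this
  have : lam * eotObjective C lam P ≤ lam * eotObjective C lam Q := by
    rw [hfP, hfQ]; linarith
  exact le_of_mul_le_mul_left this hlam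

lemma eot_prod {n m : ℕ} (C : Matrix (Fin n) (Fin m) ℝ) (lam : ℝ)
    (P : Matrix (Fin n) (Fin m) ℝ) :
    eotObjective C lam P = (∑ p : Fin n × Fin m, C p.1 p.2 * P p.1 p.2)
      + (1 / lam) * ∑ p : Fin n × Fin m, P p.1 p.2 * log (P p.1 p.2) := by
  unfold eotObjective
  rw [Fintype.sum_prod_type, Fintype.sum_prod_type]; ring

lemma minimizer_pos {n m : ℕ} (C : Matrix (Fin n) (Fin m) ℝ) (lam : ℝ) (hlam : 0 < lam)
    (r : Fin n → ℝ) (c : Fin m → ℝ)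
    (hr : ∀ i, 0 < r i) (hc : ∀ j, 0 < c j)
    (hr1 : ∑ i, r i = 1) (hc1 : ∑ j, c j = 1)
    (P : Matrix (Fin n) (Fin m) ℝ) (hP : P ∈ transportPolytope r c)
    (hmin : ∀ Q ∈ transportPolytope r c, eotObjective C lam P ≤ eotObjective C lam Q) :
    ∀ i j, 0 < P i j := by
  by_contra hcon
  push_neg at hcon
  obtain ⟨i0, j0, h0⟩ := hcon
  have hPz : P i0 j0 = 0 := le_antisymm h0 (hP.1 i0 j0)
  set R : Matrix (Fin n) (Fin m) ℝ := fun i j => r i * c j with hR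
  have hRmem : R ∈ transportPolytope r c := by
    refine ⟨fun i j => (mul_pos (hr i) (hc j)).le, fun i => ?_, fun j => ?_⟩
    · rw [← Finset.mul_sum, hc1, mul_one]
    · rw [← Finset.sum_mul, hr1, one_mul]
  set z : Fin n × Fin m := (i0, j0) with hz
  set ρ : ℝ := r i0 * c j0 with hρ
  have hρ0 : 0 < ρ := mul_pos (hr i0) (hc j0)
  set A : ℝ := ∑ p : Fin n × Fin m, C p.1 p.2 * (R p.1 p.2 - P p.1 p.2) with hA
  set K : ℝ := ∑ p ∈ (Finset.univ.erase z),
      (R p.1 p.2 * log (R p.1 p.2) - P p.1 p.2 * log (P p.1 p.2)) with hK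
  set B : ℝ := A + (K + ρ * log ρ) / lam with hB
  set ε : ℝ := min (1/2) (Real.exp (-B * lam / ρ - 1)) with hε
  have hε0 : 0 < ε := lt_min (by norm_num) (Real.exp_pos _)
  have hε1 : ε ≤ 1/2 := min_le_left _ _
  have hlogε : log ε ≤ -B * lam / ρ - 1 := by
    calc log ε ≤ log (Real.exp (-B * lam / ρ - 1)) :=
          Real.log_le_log hε0 (min_le_right _ _)
      _ = -B * lam / ρ - 1 := Real.log_exp _
  set Q : Matrix (Fin n) (Fin m) ℝ := fun i j => P i j + ε * (R i j - P i j) with hQ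
  have hQmem : Q ∈ transportPolytope r c := by
    refine ⟨fun i j => ?_, fun i => ?_, fun j => ?_⟩
    · have : Q i j = (1 - ε) * P i j + ε * R i j := by rw [hQ]; ring
      rw [this]
      have h1 : (0:ℝ) ≤ 1 - ε := by linarith
      exact add_nonneg (mul_nonneg h1 (hP.1 i j)) (mul_nonneg hε0.le (hRmem.1 i j))
    · simp only [hQ, Finset.sum_add_distrib, hP.2.1 i, ← Finset.mul_sum,
        Finset.sum_sub_distrib, hRmem.2.1 i]
      ring
    · simp only [hQ, Finset.sum_add_distrib, hP.2.2 j, ← Finset.mul_sum,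
        Finset.sum_sub_distrib, hRmem.2.2 j]
      ring
  -- entropy bound
  have hconv : ∀ p : Fin n × Fin m,
      Q p.1 p.2 * log (Q p.1 p.2) - P p.1 p.2 * log (P p.1 p.2)
        ≤ ε * (R p.1 p.2 * log (R p.1 p.2) - P p.1 p.2 * log (P p.1 p.2)) := by
    intro p
    have hcv := Real.convexOn_mul_log.2 (Set.mem_Ici.2 (hP.1 p.1 p.2))
      (Set.mem_Ici.2 (hRmem.1 p.1 p.2)) (by linarith : (0:ℝ) ≤ 1 - ε) hε0.le
      (by ring : (1 - ε) + ε = 1)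
    simp only [smul_eq_mul] at hcv
    have hq : Q p.1 p.2 = (1 - ε) * P p.1 p.2 + ε * R p.1 p.2 := by rw [hQ]; ring
    rw [hq]
    nlinarith [hcv]
  have hQz : Q i0 j0 = ε * ρ := by simp only [hQ, hρ, hPz, hR]; ring
  have hzmem : z ∈ (Finset.univ : Finset (Fin n × Fin m)) := Finset.mem_univ z
  have hent : ∑ p : Fin n × Fin m, (Q p.1 p.2 * log (Q p.1 p.2) - P p.1 p.2 * log (P p.1 p.2))
      ≤ ε * K + ε * ρ * log ε + ε * ρ * log ρ := by
    rw [← Finset.sum_erase_add _ _ hzmem]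
    have h1 : ∑ p ∈ Finset.univ.erase z,
        (Q p.1 p.2 * log (Q p.1 p.2) - P p.1 p.2 * log (P p.1 p.2)) ≤ ε * K := by
      rw [hK, Finset.mul_sum]
      exact Finset.sum_le_sum fun p _ => hconv p
    have h2 : Q z.1 z.2 * log (Q z.1 z.2) - P z.1 z.2 * log (P z.1 z.2)
        = ε * ρ * log ε + ε * ρ * log ρ := by
      have : z.1 = i0 ∧ z.2 = j0 := ⟨rfl, rfl⟩
      rw [this.1, this.2, hQz, hPz, Real.log_mul hε0.ne' hρ0.ne']
      ring
    rw [h2]; linarith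
  -- cost part
  have hcost : (∑ p : Fin n × Fin m, C p.1 p.2 * Q p.1 p.2)
      - (∑ p : Fin n × Fin m, C p.1 p.2 * P p.1 p.2) = ε * A := by
    rw [hA, ← Finset.sum_sub_distrib, Finset.mul_sum]
    exact Finset.sum_congr rfl fun p _ => by rw [hQ]; ring
  have hdiff : eotObjective C lam Q - eotObjective C lam P
      ≤ ε * A + (1/lam) * (ε * K + ε * ρ * log ε + ε * ρ * log ρ) := by
    rw [eot_prod, eot_prod]
    have := mul_le_mul_of_nonneg_left hent (by positivity : (0:ℝ) ≤ 1/lam)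
    rw [Finset.mul_sum] at this
    have hexp : ∑ p : Fin n × Fin m,
        (1/lam) * (Q p.1 p.2 * log (Q p.1 p.2) - P p.1 p.2 * log (P p.1 p.2))
        = (1/lam) * ∑ p : Fin n × Fin m, Q p.1 p.2 * log (Q p.1 p.2)
          - (1/lam) * ∑ p : Fin n × Fin m, P p.1 p.2 * log (P p.1 p.2) := by
      rw [← mul_sub, ← Finset.sum_sub_distrib]
      exact Finset.mul_sum _ _ _ |>.symm
    rw [hexp] at this
    linarith
  have hge : (0:ℝ) ≤ eotObjective C lam Q - eotObjective C lam P :=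
    sub_nonneg.2 (hmin Q hQmem)
  -- contradiction
  have h5 : ε * ρ * log ε ≤ ε * ρ * (-B * lam / ρ - 1) :=
    mul_le_mul_of_nonneg_left hlogε (by positivity)
  have h6 : ε * ρ * (-B * lam / ρ - 1) = -ε * B * lam - ε * ρ := by
    field_simp <;> ring
  have h7 : ε * B = ε * A + ε * ((K + ρ * log ρ) / lam) := by rw [hB]; ring
  have h8 : ε * ((K + ρ * log ρ) / lam) = (1/lam) * (ε * K + ε * ρ * log ρ) := by
    field_simp
  have h9 : (1/lam) * (ε * ρ * log ε) ≤ (1/lam) * (-ε * B * lam - ε * ρ) := by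
    rw [← h6]
    exact mul_le_mul_of_nonneg_left h5 (by positivity)
  have h10 : (1/lam) * (-ε * B * lam - ε * ρ) = -ε * B - ε * ρ / lam := by
    field_simp <;> ring
  have h11 : (0:ℝ) < ε * ρ / lam := by positivity
  have h12 : (1/lam) * (ε * K + ε * ρ * log ε + ε * ρ * log ρ)
      = (1/lam) * (ε * K + ε * ρ * log ρ) + (1/lam) * (ε * ρ * log ε) := by ring
  have h9' : (1/lam) * (ε * ρ * log ε) ≤ -ε * B - ε * ρ / lam := h10 ▸ h9
  linarith [hge, hdiff, h9', h7, h8, h12, h11]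

lemma ind_sum {n m : ℕ} (x : Fin n) (y : Fin m) (X : Fin n → Fin m → ℝ) :
    ∑ a, ∑ b, (if a = x ∧ b = y then (1:ℝ) else 0) * X a b = X x y := by
  simp [ite_and, Finset.sum_ite_eq', mul_comm]

lemma ind_row {n m : ℕ} (x : Fin n) (y : Fin m) (a : Fin n) :
    ∑ b, (if a = x ∧ b = y then (1:ℝ) else 0) = if a = x then 1 else 0 := by
  simp [ite_and, Finset.sum_ite_eq']

lemma ind_col {n m : ℕ} (x : Fin n) (y : Fin m) (b : Fin m) :
    ∑ a, (if a = x ∧ b = y then (1:ℝ) else 0) = if b = y then 1 else 0 := by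
  by_cases h : b = y <;> simp [ite_and, h, Finset.sum_ite_eq']

lemma foc {n m : ℕ} (C : Matrix (Fin n) (Fin m) ℝ) (lam : ℝ) (hlam : 0 < lam)
    (r : Fin n → ℝ) (c : Fin m → ℝ)
    (P : Matrix (Fin n) (Fin m) ℝ) (hP : P ∈ transportPolytope r c)
    (hpos : ∀ i j, 0 < P i j)
    (hmin : ∀ Q ∈ transportPolytope r c, eotObjective C lam P ≤ eotObjective C lam Q)
    (i i' : Fin n) (j j' : Fin m) :
    (log (P i j) + lam * C i j) + (log (P i' j') + lam * C i' j')
      = (log (P i j') + lam * C i j') + (log (P i' j) + lam * C i' j) := by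
  classical
  set D : Fin n → Fin m → ℝ := fun a b =>
    (if a = i ∧ b = j then (1:ℝ) else 0) + (if a = i' ∧ b = j' then 1 else 0)
      - (if a = i ∧ b = j' then 1 else 0) - (if a = i' ∧ b = j then 1 else 0) with hD
  have hDbnd : ∀ a b, |D a b| ≤ 2 := by
    intro a b
    rw [hD, abs_le]
    constructor <;> · dsimp only; split_ifs <;> norm_num
  have hDrow : ∀ a, ∑ b, D a b = 0 := by
    intro a
    simp only [hD, Finset.sum_sub_distrib, Finset.sum_add_distrib, ind_row]
    ring
  have hDcol : ∀ b, ∑ a, D a b = 0 := by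
    intro b
    simp only [hD, Finset.sum_sub_distrib, Finset.sum_add_distrib, ind_col]
    ring
  -- the perturbed matrix stays in the polytope for small ε
  have hne : (Finset.univ : Finset (Fin n × Fin m)).Nonempty := ⟨(i, j), Finset.mem_univ _⟩
  set pm : ℝ := Finset.univ.inf' hne (fun p : Fin n × Fin m => P p.1 p.2) with hpm
  have hpm0 : 0 < pm := by
    rw [hpm, Finset.lt_inf'_iff]
    exact fun p _ => hpos p.1 p.2
  set δ : ℝ := pm / 3 with hδ
  have hδ0 : 0 < δ := by positivity
  have hmem : ∀ ε : ℝ, |ε| < δ →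
      (fun a b => P a b + ε * D a b) ∈ transportPolytope r c := by
    intro ε hε
    refine ⟨fun a b => ?_, fun a => ?_, fun b => ?_⟩
    · show 0 ≤ P a b + ε * D a b
      have h1 : pm ≤ P a b := Finset.inf'_le _ (Finset.mem_univ (a, b))
      have h2 : |ε * D a b| ≤ |ε| * 2 := by
        rw [abs_mul]
        exact mul_le_mul_of_nonneg_left (hDbnd a b) (abs_nonneg ε)
      have h3 : -(|ε| * 2) ≤ ε * D a b := neg_le_of_abs_le h2
      have : |ε| * 2 < pm := by rw [hδ] at hε; linarith
      linarith
    · rw [Finset.sum_add_distrib, hP.2.1 a, ← Finset.mul_sum, hDrow a, mul_zero, add_zero]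
    · rw [Finset.sum_add_distrib, hP.2.2 b, ← Finset.mul_sum, hDcol b, mul_zero, add_zero]
  -- derivative of the objective along the perturbation
  set g : ℝ → ℝ := fun ε => eotObjective C lam (fun a b => P a b + ε * D a b) with hg
  set L : ℝ := (∑ a, ∑ b, C a b * D a b)
      - (1 / lam) * (-(∑ a, ∑ b, (log (P a b) + 1) * D a b)) with hL
  have hderiv : HasDerivAt g L 0 := by
    have H1 : HasDerivAt (fun ε : ℝ => ∑ a, ∑ b, C a b * (P a b + ε * D a b))
        (∑ a, ∑ b, C a b * D a b) 0 := by
      refine HasDerivAt.fun_sum fun a _ => HasDerivAt.fun_sum fun b _ => ?_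
      have h0 : HasDerivAt (fun x : ℝ => x * D a b) (D a b) 0 := hasDerivAt_mul_const (D a b)
      have := (h0.const_add (P a b)).const_mul (C a b)
      simpa using this
    have H2 : HasDerivAt
        (fun ε : ℝ => ∑ a, ∑ b, (P a b + ε * D a b) * log (P a b + ε * D a b))
        (∑ a, ∑ b, (log (P a b) + 1) * D a b) 0 := by
      refine HasDerivAt.fun_sum fun a _ => HasDerivAt.fun_sum fun b _ => ?_
      have h0 : HasDerivAt (fun x : ℝ => x * D a b) (D a b) 0 := hasDerivAt_mul_const (D a b)
      have hinner : HasDerivAt (fun ε : ℝ => P a b + ε * D a b) (D a b) 0 :=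
        h0.const_add (P a b)
      have hpt : (P a b + (0:ℝ) * D a b) = P a b := by ring
      have houter : HasDerivAt (fun x : ℝ => x * log x) (log (P a b) + 1) (P a b) :=
        Real.hasDerivAt_mul_log (hpos a b).ne'
      have := HasDerivAt.comp (0:ℝ) (hpt ▸ houter) hinner
      rw [hpt] at this
      exact this
    have := H1.sub ((H2.neg).const_mul (1/lam))
    exact this
  have hlocmin : IsLocalMin g 0 := by
    have hg0 : g 0 = eotObjective C lam P := by
      simp only [hg, zero_mul, add_zero]
    show ∀ᶠ ε in nhds 0, g 0 ≤ g ε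
    filter_upwards [Metric.ball_mem_nhds (0:ℝ) hδ0] with ε hε
    rw [hg0]
    rw [Metric.mem_ball, Real.dist_eq, sub_zero] at hε
    exact hmin _ (hmem ε hε)
  have hL0 : L = 0 := hlocmin.hasDerivAt_eq_zero hderiv
  have Dsum : ∀ X : Fin n → Fin m → ℝ,
      ∑ a, ∑ b, D a b * X a b = X i j + X i' j' - X i j' - X i' j := by
    intro X
    simp only [hD, sub_mul, add_mul, Finset.sum_sub_distrib, Finset.sum_add_distrib,
      one_mul, ind_sum]
  have e1 : ∑ a, ∑ b, C a b * D a b = C i j + C i' j' - C i j' - C i' j := by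
    rw [show (∑ a, ∑ b, C a b * D a b) = ∑ a, ∑ b, D a b * C a b from
      Finset.sum_congr rfl fun a _ => Finset.sum_congr rfl fun b _ => mul_comm _ _]
    exact Dsum (fun a b => C a b)
  have e2 : ∑ a, ∑ b, (log (P a b) + 1) * D a b
      = (log (P i j) + 1) + (log (P i' j') + 1) - (log (P i j') + 1) - (log (P i' j) + 1) := by
    rw [show (∑ a, ∑ b, (log (P a b) + 1) * D a b) = ∑ a, ∑ b, D a b * (log (P a b) + 1) from
      Finset.sum_congr rfl fun a _ => Finset.sum_congr rfl fun b _ => mul_comm _ _]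
    exact Dsum (fun a b => log (P a b) + 1)
  rw [hL, e1, e2] at hL0
  have hlam' : lam ≠ 0 := hlam.ne'
  field_simp at hL0
  linarith

end Aux

/-- `P ∈ U(r,c)` minimizes `⟨C,P⟩ − (1/λ)H(P)` over `U(r,c)` iff there are strictly
positive vectors `u`, `v` with `P_ij = u_i · e^{−λ C_ij} · v_j` for all `i, j`. -/
theorem sinkhorn_plan_iff_diagonal_scaling {n m : ℕ} (C : Matrix (Fin n) (Fin m) ℝ)
    (lam : ℝ) (hlam : 0 < lam) (r : Fin n → ℝ) (c : Fin m → ℝ)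
    (hr : ∀ i, 0 < r i) (hc : ∀ j, 0 < c j)
    (hr1 : ∑ i, r i = 1) (hc1 : ∑ j, c j = 1)
    (P : Matrix (Fin n) (Fin m) ℝ) (hP : P ∈ transportPolytope r c) :
    (∀ Q ∈ transportPolytope r c, eotObjective C lam P ≤ eotObjective C lam Q) ↔
      ∃ (u : Fin n → ℝ) (v : Fin m → ℝ), (∀ i, 0 < u i) ∧ (∀ j, 0 < v j) ∧
        ∀ i j, P i j = u i * Real.exp (-lam * C i j) * v j := by
  constructor
  · intro hmin
    have hn : 0 < n := by
      rcases Nat.eq_zero_or_pos n with h | h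
      · subst h; simp at hr1
      · exact h
    have hm : 0 < m := by
      rcases Nat.eq_zero_or_pos m with h | h
      · subst h; simp at hc1
      · exact h
    set i0 : Fin n := ⟨0, hn⟩
    set j0 : Fin m := ⟨0, hm⟩
    have hpos := minimizer_pos C lam hlam r c hr hc hr1 hc1 P hP hmin
    have hfoc := foc C lam hlam r c P hP hpos hmin
    refine ⟨fun i => Real.exp (log (P i j0) + lam * C i j0),
      fun j => Real.exp ((log (P i0 j) + lam * C i0 j) - (log (P i0 j0) + lam * C i0 j0)),
      fun i => Real.exp_pos _, fun j => Real.exp_pos _, fun i j => ?_⟩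
    rw [← Real.exp_add, ← Real.exp_add]
    have hkey : (log (P i j0) + lam * C i j0) + (-lam * C i j)
        + ((log (P i0 j) + lam * C i0 j) - (log (P i0 j0) + lam * C i0 j0))
        = log (P i j) := by
      have h := hfoc i i0 j j0
      linarith
    rw [hkey, Real.exp_log (hpos i j)]
  · rintro ⟨u, v, hu, hv, hform⟩
    exact min_of_scaling C lam hlam r c hr1 hc1 P hP u v hu hv hform
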